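/- For every real k > 2, there is no continuous, strictly increasing function γ : ℝ → ℝ with γ(u+1) = γ(u) + 1 for all u that satisfies γ(γ(u)) = 2γ(u) − u − (k/(2π))·sin(2π·γ(u)) for all u ∈ ℝ. (Hence the Taylor–Chirikov standard map with parameter k > 2 has no rotational invariant circle carrying order-preserving dynamics; the critical parameter satisfies k_c ≤ 2.) -/

import Mathlib

/-- For every `k > 2`, the standard map (in delay coordinates) has no
rotational invariant circle carrying order-preserving dynamics: there is no continuous,
strictly increasing `γ : ℝ → ℝ` with `γ(u+1) = γ(u) + 1` satisfying
`γ(γ(u)) = 2γ(u) − u − (k/(2π)) sin(2π γ(u))` for all `u`. -/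
theorem stmt2 (k : ℝ) (hk : 2 < k) :
    ¬ ∃ γ : ℝ → ℝ, Continuous γ ∧ StrictMono γ ∧ (∀ u, γ (u + 1) = γ u + 1) ∧
      (∀ u : ℝ, γ (γ u) =
        2 * γ u - u - (k / (2 * Real.pi)) * Real.sin (2 * Real.pi * γ u)) := by
  rintro ⟨γ, hc, hm, hper, heq⟩
  have hπ := Real.pi_pos
  -- integer periodicity
  have hint : ∀ (n : ℤ) (u : ℝ), γ (u + n) = γ u + n := by
    intro n
    induction n using Int.induction_on with
    | zero => simp
    | succ m ih =>
      intro u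
      have h1 : γ (u + ((m : ℝ) + 1)) = γ (u + m) + 1 := by
        rw [← add_assoc]; exact hper _
      push_cast
      rw [h1]
      have h2 := ih u
      push_cast at h2
      rw [h2]; ring
    | pred m ih =>
      intro u
      have h1 : γ (u - ((m : ℝ) + 1) + 1) = γ (u - ((m : ℝ) + 1)) + 1 := hper _
      have h2 : γ (u + (-(m : ℝ))) = γ u + (-(m : ℝ)) := by
        have := ih u; push_cast at this; exact this
      have h3 : u - ((m : ℝ) + 1) + 1 = u + (-(m : ℝ)) := by ring
      rw [h3] at h1
      push_cast
      have : γ (u + (-(m : ℝ) - 1)) = γ u + (-(m : ℝ) - 1) := by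
        have h4 : u + (-(m : ℝ) - 1) = u - ((m : ℝ) + 1) := by ring
        rw [h4]; linarith [h1, h2]
      linarith [this]
  have hsurj : Function.Surjective γ := by
    intro v
    set n : ℤ := ⌈|v - γ 0|⌉ with hn
    have hnv : |v - γ 0| ≤ (n : ℝ) := Int.le_ceil _
    have h1 : γ (0 + (-n : ℤ)) = γ 0 + (-n : ℤ) := hint (-n) 0
    have h2 : γ (0 + (n : ℤ)) = γ 0 + (n : ℤ) := hint n 0
    have habs := abs_le.1 hnv
    apply intermediate_value_univ ((0 : ℝ) + (-n : ℤ)) ((0 : ℝ) + (n : ℤ)) hc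
    rw [h1, h2]
    constructor
    · push_cast; linarith [habs.1]
    · push_cast; linarith [habs.2]
  -- key: F v := 2v - c sin(2πv) equals γ v + γ⁻¹ v
  have key : ∀ a b : ℝ, a < b →
      2 * a - (k / (2 * Real.pi)) * Real.sin (2 * Real.pi * a) <
      2 * b - (k / (2 * Real.pi)) * Real.sin (2 * Real.pi * b) := by
    intro a b hab
    obtain ⟨ua, hua⟩ := hsurj a
    obtain ⟨ub, hub⟩ := hsurj b
    have hu : ua < ub := by
      by_contra h
      push_neg at h
      have := hm.le_iff_le.2 h
      rw [hua, hub] at this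
      linarith
    have ea := heq ua
    have eb := heq ub
    rw [hua] at ea
    rw [hub] at eb
    have hgab : γ a < γ b := hm hab
    linarith
  -- numeric contradiction at a = 0, b = t/(2π)
  set t : ℝ := min 1 ((k - 2) / k) with htdef
  have hk0 : (0 : ℝ) < k := by linarith
  have ht0 : 0 < t := lt_min one_pos (div_pos (by linarith) hk0)
  have ht1 : t ≤ 1 := min_le_left _ _
  have ht2 : t ≤ (k - 2) / k := min_le_right _ _
  have hsin : t - t ^ 3 / 4 < Real.sin t := by
    have := Real.sin_gt_sub_cube ht0
    linarith [pow_pos ht0 3]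
  set v : ℝ := t / (2 * Real.pi) with hv
  have hv0 : 0 < v := by rw [hv]; exact div_pos ht0 (by positivity)
  have harg : 2 * Real.pi * v = t := by
    rw [hv]; field_simp
  have hkey := key 0 v hv0
  rw [harg] at hkey
  simp only [mul_zero, Real.sin_zero] at hkey
  -- hkey : 0 < 2 v - (k/(2π)) sin t ; show contradiction
  have htk : k * t ≤ k - 2 := by
    have := (le_div_iff₀ hk0).1 ht2
    nlinarith
  have hbound : 2 * v ≤ (k / (2 * Real.pi)) * Real.sin t := by
    have h1 : k * (t - t ^ 3 / 4) ≥ 2 * t := by nlinarith [sq_nonneg t, ht0.le]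
    have h2 : 2 * t ≤ k * Real.sin t := by nlinarith
    have h3 : (k / (2 * Real.pi)) * Real.sin t = k * Real.sin t / (2 * Real.pi) := by ring
    rw [hv, h3, le_div_iff₀ (by positivity)]
    have h4 : 2 * (t / (2 * Real.pi)) * (2 * Real.pi) = 2 * t := by
      field_simp
    rw [h4]; exact h2
  linarith
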